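/- arXiv:2601.03387 — 2 statements merged into one kernel-verified Lean document; each statement's English description precedes it below -/
import Mathlib

section
/- Let G be a standard real Gaussian random variable (mean 0, variance 1). Then for every ρ > 0, E[ Q( √ρ · |G| ) ] = (1/π) · arctan( 1/√ρ ). (Closed-form single-antenna average SEP, equation (n2exp); equivalently, for U ~ Gamma(shape 1/2, rate 1/2), E[Q(√(ρU))] = arctan(ρ^{−1/2})/π.) -/
open MeasureTheory ProbabilityTheory Real

/-- The Gaussian Q-function `Q(x) = (1/√(2π)) ∫_x^∞ e^{−t²/2} dt`. -/
noncomputable def gaussQ (x : ℝ) : ℝ :=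
  (Real.sqrt (2 * Real.pi))⁻¹ * ∫ t in Set.Ioi x, Real.exp (-t ^ 2 / 2)

open Set
open scoped NNReal ENNReal

lemma expInt : Integrable (fun t : ℝ => Real.exp (-t ^ 2 / 2)) := by
  have h := integrable_exp_neg_mul_sq (b := (1/2 : ℝ)) (by norm_num)
  refine h.congr ?_
  exact ae_of_all _ fun t => by ring_nf

lemma gaussQ_anti : Antitone gaussQ := by
  intro a b hab
  refine mul_le_mul_of_nonneg_left ?_ (inv_nonneg.mpr (Real.sqrt_nonneg _))
  exact setIntegral_mono_set expInt.integrableOn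
    (ae_of_all _ fun t => (Real.exp_pos _).le)
    (HasSubset.Subset.eventuallyLE (Ioi_subset_Ioi hab))

lemma inner_int {b : ℝ} (hb : 0 < b) :
    ∫ x : ℝ, |x| * Real.exp (-b * x ^ 2) = 1 / b := by
  have h1 : (fun x : ℝ => |x| * Real.exp (-b * x ^ 2))
      = fun x : ℝ => |x| * Real.exp (-b * |x| ^ 2) := by
    ext x; rw [sq_abs]
  rw [h1, integral_comp_abs (f := fun x => x * Real.exp (-b * x ^ 2))]
  have h2 : ∫ x in Ioi (0:ℝ), x * Real.exp (-b * x ^ 2) = 0 - (-Real.exp (-b * 0 ^ 2) / (2 * b)) := by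
    refine integral_Ioi_of_hasDerivAt_of_tendsto'
      (E := ℝ) (f := fun x => -Real.exp (-b * x ^ 2) / (2 * b)) (fun x _ => ?_)
      (integrable_mul_exp_neg_mul_sq hb).integrableOn ?_
    · have : HasDerivAt (fun x : ℝ => -Real.exp (-b * x ^ 2) / (2 * b))
          (-(Real.exp (-b * x ^ 2) * (-b * (2 * x ^ (2-1)))) / (2 * b)) x := by
        exact (((hasDerivAt_pow 2 x).const_mul (-b)).exp.neg.div_const (2 * b))
      refine this.congr_deriv ?_
      field_simp
      ring
    · have : Filter.Tendsto (fun x : ℝ => Real.exp (-b * x ^ 2)) Filter.atTop (nhds 0) := by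
        refine Real.tendsto_exp_atBot.comp ?_
        refine Filter.Tendsto.const_mul_atTop_of_neg (neg_neg_iff_pos.mpr hb) ?_
        exact Filter.tendsto_pow_atTop two_ne_zero
      simpa using (this.neg.div_const (2 * b))
  rw [h2]
  field_simp
  simp

/-- Closed-form single-antenna average SEP:
`E[Q(√ρ·|G|)] = arctan(1/√ρ)/π` for a standard real Gaussian `G`. -/
theorem stmt13
    {Ω : Type*} [MeasurableSpace Ω] (P : Measure Ω) [IsProbabilityMeasure P]
    (G : Ω → ℝ) (hGmeas : Measurable G) (hGlaw : Measure.map G P = gaussianReal 0 1)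
    (ρ : ℝ) (hρ : 0 < ρ) :
    ∫ ω, gaussQ (Real.sqrt ρ * |G ω|) ∂P = (1 / π) * Real.arctan (1 / Real.sqrt ρ) := by
  have hs : 0 < Real.sqrt ρ := Real.sqrt_pos.mpr hρ
  have hπ : 0 < π := Real.pi_pos
  -- Step A: transfer to the Gaussian measure
  have hQm : Measurable gaussQ := gaussQ_anti.measurable
  have hf : AEStronglyMeasurable (fun x : ℝ => gaussQ (Real.sqrt ρ * |x|)) (Measure.map G P) :=
    (hQm.comp (measurable_const.mul measurable_abs)).aestronglyMeasurable
  have hmap := integral_map (φ := G) (μ := P) hGmeas.aemeasurable hf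
  rw [hGlaw] at hmap
  rw [← hmap]
  -- Step B: Gaussian measure has density
  rw [gaussianReal_of_var_ne_zero 0 one_ne_zero]
  have hpdf : gaussianPDF 0 1 = fun x => ((Real.toNNReal (gaussianPDFReal 0 1 x) : ℝ≥0) : ℝ≥0∞) := by
    ext x; rfl
  rw [hpdf, integral_withDensity_eq_integral_smul
    ((measurable_gaussianPDFReal 0 1).real_toNNReal) _]
  have hsm : ∀ x : ℝ, (Real.toNNReal (gaussianPDFReal 0 1 x)) • gaussQ (Real.sqrt ρ * |x|)
      = gaussianPDFReal 0 1 x * gaussQ (Real.sqrt ρ * |x|) := by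
    intro x
    rw [NNReal.smul_def, Real.coe_toNNReal _ (gaussianPDFReal_nonneg 0 1 x), smul_eq_mul]
  simp_rw [hsm]
  -- Step C: substitution t = |x| u in the Q integral, a.e. in x
  have h0 : ∀ᵐ (x : ℝ) ∂volume, x ≠ 0 := by
    rw [ae_iff]
    simpa using measure_singleton (0 : ℝ)
  have key : (fun x : ℝ => gaussianPDFReal 0 1 x * gaussQ (Real.sqrt ρ * |x|))
      =ᵐ[volume] fun x : ℝ => ((Real.sqrt (2 * π))⁻¹) ^ 2 *
        ∫ u in Set.Ioi (Real.sqrt ρ), |x| * Real.exp (-((1 + u ^ 2) / 2) * x ^ 2) := by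
    filter_upwards [h0] with x hx
    have hax : 0 < |x| := abs_pos.mpr hx
    have hsub := integral_comp_mul_left_Ioi (fun t => Real.exp (-t ^ 2 / 2)) (Real.sqrt ρ) hax
    have h2 : ∫ t in Set.Ioi (|x| * Real.sqrt ρ), Real.exp (-t ^ 2 / 2)
        = |x| * ∫ u in Set.Ioi (Real.sqrt ρ), Real.exp (-(|x| * u) ^ 2 / 2) := by
      rw [hsub, smul_eq_mul, ← mul_assoc, mul_inv_cancel₀ hax.ne', one_mul]
    have hpdfx : gaussianPDFReal 0 1 x = (Real.sqrt (2 * π))⁻¹ * Real.exp (-x ^ 2 / 2) := by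
      simp [gaussianPDFReal]
    have h3 : ∀ u : ℝ, |x| * Real.exp (-((1 + u ^ 2) / 2) * x ^ 2)
        = (|x| * Real.exp (-x ^ 2 / 2)) * Real.exp (-(|x| * u) ^ 2 / 2) := by
      intro u
      rw [mul_assoc, ← Real.exp_add]
      congr 2
      rw [mul_pow, sq_abs]
      ring
    simp_rw [h3]
    rw [MeasureTheory.integral_const_mul]
    unfold gaussQ
    rw [hpdfx, mul_comm (Real.sqrt ρ) |x|, h2]
    ring
  rw [integral_congr_ae key, MeasureTheory.integral_const_mul]
  -- Step D: Fubini
  have hb : ∀ u : ℝ, (0 : ℝ) < (1 + u ^ 2) / 2 := fun u => by positivity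
  have hcont : Continuous fun p : ℝ × ℝ => |p.1| * Real.exp (-((1 + p.2 ^ 2) / 2) * p.1 ^ 2) := by
    fun_prop
  have hInt : Integrable
      (Function.uncurry fun x u : ℝ => |x| * Real.exp (-((1 + u ^ 2) / 2) * x ^ 2))
      (volume.prod (volume.restrict (Set.Ioi (Real.sqrt ρ)))) := by
    refine (integrable_prod_iff'
      (f := Function.uncurry fun x u : ℝ => |x| * Real.exp (-((1 + u ^ 2) / 2) * x ^ 2))
      hcont.aestronglyMeasurable).mpr ⟨?_, ?_⟩
    · refine ae_of_all _ fun u => ?_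
      refine (integrable_mul_exp_neg_mul_sq (hb u)).abs.congr (ae_of_all _ fun x => ?_)
      simp only [Function.uncurry]
      rw [abs_mul, abs_of_pos (Real.exp_pos _)]
    · have heq : ∀ u : ℝ,
          (∫ x : ℝ, ‖|x| * Real.exp (-((1 + u ^ 2) / 2) * x ^ 2)‖) = 2 * (1 + u ^ 2)⁻¹ := by
        intro u
        have : (∫ x : ℝ, ‖|x| * Real.exp (-((1 + u ^ 2) / 2) * x ^ 2)‖)
            = ∫ x : ℝ, |x| * Real.exp (-((1 + u ^ 2) / 2) * x ^ 2) := by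
          congr 1; ext x
          rw [Real.norm_eq_abs, abs_of_nonneg (by positivity)]
        rw [this, inner_int (hb u)]
        field_simp
      have h2int : Integrable (fun u : ℝ => 2 * (1 + u ^ 2)⁻¹)
          (volume.restrict (Set.Ioi (Real.sqrt ρ))) :=
        (integrable_inv_one_add_sq.const_mul 2).restrict
      exact h2int.congr (ae_of_all _ fun u => by
        simp only [Function.uncurry]
        exact (heq u).symm)
  rw [MeasureTheory.integral_integral_swap hInt]
  -- Step E: inner integral
  have h5 : ∀ u : ℝ, (∫ x : ℝ, |x| * Real.exp (-((1 + u ^ 2) / 2) * x ^ 2))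
      = 2 * (1 + u ^ 2)⁻¹ := by
    intro u
    rw [inner_int (hb u)]
    field_simp
  simp_rw [h5]
  -- Step F: outer integral and arithmetic
  rw [MeasureTheory.integral_const_mul, integral_Ioi_inv_one_add_sq]
  have hc2 : ((Real.sqrt (2 * π))⁻¹) ^ 2 = (2 * π)⁻¹ := by
    rw [inv_pow, Real.sq_sqrt (by positivity)]
  rw [hc2, one_div (Real.sqrt ρ), arctan_inv_of_pos hs]
  field_simp
end

section
/- Let n ≥ 3 be an integer, let W be an Exp(1) random variable and θ an independent U(−π/2^n, π/2^n) random variable. Then, as z → 0 from above, P( √(W·(1 − sin 2θ)) ≤ z ) = (2^{n−1}/π) · tan(π/2^{n−1}) · z² + o(z²). (Small-argument behavior of the per-branch statistic Z for n ≥ 3, corresponding to the density expansion f_Z(z) = (2^n/π)·tan(π/2^{n−1})·z + o(z³) in Appendix C.) -/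
open MeasureTheory ProbabilityTheory Real Filter Asymptotics

/-- The uniform probability measure on the open interval `(a, b)`. -/
noncomputable def unifOn (a b : ℝ) : Measure ℝ :=
  (ENNReal.ofReal (b - a))⁻¹ • (volume.restrict (Set.Ioo a b))

lemma expMeasure_Iic' (c : ℝ) (hc : 0 ≤ c) :
    expMeasure 1 (Set.Iic c) = ENNReal.ofReal (1 - Real.exp (-c)) := by
  rw [expMeasure, gammaMeasure, withDensity_apply _ measurableSet_Iic]
  have h : ∫⁻ y in Set.Iic c, gammaPDF 1 1 y = ∫⁻ y in Set.Iic c, exponentialPDF 1 y := rfl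
  rw [h, lintegral_exponentialPDF_eq_antiDeriv one_pos, if_pos hc]
  norm_num

lemma exp_approx' {x : ℝ} (hx : 0 ≤ x) : |1 - Real.exp (-x) - x| ≤ x ^ 2 := by
  have h1 : 1 - x ≤ Real.exp (-x) := by have := Real.add_one_le_exp (-x); linarith
  have hp : (0:ℝ) < Real.exp (-x) := Real.exp_pos _
  have hmul : Real.exp (-x) * (1 + x) ≤ 1 := by
    have h2 : 1 + x ≤ Real.exp x := by have := Real.add_one_le_exp x; linarith
    calc Real.exp (-x) * (1 + x) ≤ Real.exp (-x) * Real.exp x :=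
          mul_le_mul_of_nonneg_left h2 hp.le
      _ = 1 := by rw [← Real.exp_add]; simp
  have h2 : Real.exp (-x) ≤ 1 - x + x ^ 2 := by nlinarith
  rw [abs_le]; constructor <;> nlinarith

lemma one_sub_sin' (t : ℝ) : 1 - Real.sin (2*t) = 2 * Real.cos (t + π/4)^2 := by
  have h1 := Real.cos_sq (t + π/4)
  have h2 : Real.cos (2*(t+π/4)) = -Real.sin (2*t) := by
    have h3 : 2*(t+π/4) = 2*t + π/2 := by ring
    rw [h3, Real.cos_add_pi_div_two]
  rw [h2] at h1; linarith

lemma cos_pos_aux {a t : ℝ} (ha : 0 < a) (ha' : a ≤ π/8) (ht : t ∈ Set.Icc (-a) a) :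
    0 < Real.cos (t + π/4) := by
  have hpi := Real.pi_pos
  apply Real.cos_pos_of_mem_Ioo
  have h1 := ht.1; have h2 := ht.2
  constructor <;> nlinarith

lemma one_sub_sin_pos {a t : ℝ} (ha : 0 < a) (ha' : a ≤ π/8) (ht : t ∈ Set.Icc (-a) a) :
    0 < 1 - Real.sin (2*t) := by
  rw [one_sub_sin' t]
  have := cos_pos_aux ha ha' ht
  positivity

lemma g_le_five {a t : ℝ} (ha : 0 < a) (ha' : a ≤ π/8) (ht : t ∈ Set.Icc (-a) a) :
    (1 - Real.sin (2*t))⁻¹ ≤ 5 := by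
  have hpos := one_sub_sin_pos ha ha' ht
  have hsin : Real.sin (2*t) ≤ π/4 := by
    calc Real.sin (2*t) ≤ |Real.sin (2*t)| := le_abs_self _
      _ ≤ |2*t| := Real.abs_sin_le_abs
      _ ≤ π/4 := by
          rw [abs_le]; have h1 := ht.1; have h2 := ht.2
          constructor <;> linarith
  rw [inv_le_comm₀ hpos (by norm_num)]
  have hpi2 := Real.pi_lt_d2
  norm_num
  linarith

lemma contOn_g {a : ℝ} (ha : 0 < a) (ha' : a ≤ π/8) :
    ContinuousOn (fun t => (1 - Real.sin (2*t))⁻¹) (Set.Icc (-a) a) := by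
  apply ContinuousOn.inv₀
  · fun_prop
  · intro t ht
    exact (one_sub_sin_pos ha ha' ht).ne'

lemma contOn_f {a : ℝ} (ha : 0 < a) (ha' : a ≤ π/8) (z : ℝ) :
    ContinuousOn (fun t => 1 - Real.exp (-(z^2 * (1 - Real.sin (2*t))⁻¹))) (Set.Icc (-a) a) :=
  continuousOn_const.sub
    (Real.continuous_exp.comp_continuousOn ((continuousOn_const.mul (contOn_g ha ha')).neg))

lemma hasDeriv_aux {a t : ℝ} (ha : 0 < a) (ha' : a ≤ π/8) (ht : t ∈ Set.Icc (-a) a) :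
    HasDerivAt (fun u => Real.tan (u + π/4) / 2) ((1 - Real.sin (2*t))⁻¹) t := by
  have hc := cos_pos_aux ha ha' ht
  have h1 : HasDerivAt (fun u : ℝ => u + π/4) 1 t := (hasDerivAt_id t).add_const _
  have h2 := (Real.hasDerivAt_tan hc.ne').comp t h1
  have h3 := h2.div_const 2
  refine h3.congr_deriv ?_
  rw [one_sub_sin' t]
  rw [inv_eq_one_div]
  ring

lemma integral_g (a : ℝ) (ha : 0 < a) (ha' : a ≤ π/8) :
    ∫ t in Set.Ioo (-a) a, (1 - Real.sin (2*t))⁻¹ = Real.tan (2*a) := by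
  have hle : -a ≤ a := by linarith
  have hcont := contOn_g ha ha'
  have hint : ∫ t in (-a)..a, (1 - Real.sin (2*t))⁻¹
      = Real.tan (a + π/4) / 2 - Real.tan (-a + π/4) / 2 := by
    apply intervalIntegral.integral_eq_sub_of_hasDerivAt
    · intro t ht
      rw [Set.uIcc_of_le hle] at ht
      exact hasDeriv_aux ha ha' ht
    · exact (hcont.mono (by rw [Set.uIcc_of_le hle])).intervalIntegrable
  have hioo : ∫ t in (-a)..a, (1 - Real.sin (2*t))⁻¹
      = ∫ t in Set.Ioo (-a) a, (1 - Real.sin (2*t))⁻¹ := by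
    rw [intervalIntegral.integral_of_le hle, MeasureTheory.integral_Ioc_eq_integral_Ioo]
  rw [← hioo, hint]
  have hpi := Real.pi_pos
  have hc1 : 0 < Real.cos (a + π/4) := cos_pos_aux ha ha' (by constructor <;> linarith)
  have hc2 : 0 < Real.cos (-a + π/4) := cos_pos_aux ha ha' (by constructor <;> linarith)
  have hc3 : 0 < Real.cos (2*a) := by
    apply Real.cos_pos_of_mem_Ioo; constructor <;> nlinarith
  rw [Real.tan_eq_sin_div_cos, Real.tan_eq_sin_div_cos, Real.tan_eq_sin_div_cos]
  rw [div_div, div_div]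
  rw [div_sub_div _ _ (by positivity) (by positivity), div_eq_div_iff (by positivity) hc3.ne']
  have hs := Real.sin_sq_add_cos_sq a
  simp only [Real.sin_add, Real.cos_add, Real.sin_two_mul, Real.cos_two_mul,
    Real.sin_pi_div_four, Real.cos_pi_div_four, Real.sin_neg, Real.cos_neg]
  linear_combination (2 * Real.sqrt 2 ^ 2 * Real.sin a * Real.cos a) * hs

lemma prod_apply_eq {a z : ℝ} (ha : 0 < a) (ha' : a ≤ π/8) :
    (((unifOn (-a) a).prod (expMeasure 1))
        {p : ℝ × ℝ | p.2 * (1 - Real.sin (2 * p.1)) ≤ z ^ 2}).toReal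
    = (2*a)⁻¹ * ∫ t in Set.Ioo (-a) a,
        (1 - Real.exp (-(z^2 * (1 - Real.sin (2*t))⁻¹))) := by
  haveI : IsProbabilityMeasure (expMeasure 1) := isProbabilityMeasure_expMeasure one_pos
  have hS : MeasurableSet {p : ℝ × ℝ | p.2 * (1 - Real.sin (2 * p.1)) ≤ z ^ 2} :=
    measurableSet_le (by fun_prop) measurable_const
  rw [Measure.prod_apply hS]
  rw [unifOn, lintegral_smul_measure]
  have hcongr : ∫⁻ t in Set.Ioo (-a) a,
        expMeasure 1 (Prod.mk t ⁻¹' {p : ℝ × ℝ | p.2 * (1 - Real.sin (2 * p.1)) ≤ z ^ 2})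
      = ∫⁻ t in Set.Ioo (-a) a,
        ENNReal.ofReal (1 - Real.exp (-(z^2 * (1 - Real.sin (2*t))⁻¹))) := by
    apply setLIntegral_congr_fun measurableSet_Ioo
    intro t ht
    have hpos := one_sub_sin_pos ha ha' (Set.Ioo_subset_Icc_self ht)
    have hset : Prod.mk t ⁻¹' {p : ℝ × ℝ | p.2 * (1 - Real.sin (2 * p.1)) ≤ z ^ 2}
        = Set.Iic (z^2 * (1 - Real.sin (2*t))⁻¹) := by
      ext w
      simp only [Set.mem_preimage, Set.mem_setOf_eq, Set.mem_Iic]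
      rw [← div_eq_mul_inv, le_div_iff₀ hpos]
    simp only []
    rw [hset]
    exact expMeasure_Iic' _ (by positivity)
  rw [hcongr]
  have hnn : ∀ t ∈ Set.Ioo (-a) a, 0 ≤ 1 - Real.exp (-(z^2 * (1 - Real.sin (2*t))⁻¹)) := by
    intro t ht
    have hpos := one_sub_sin_pos ha ha' (Set.Ioo_subset_Icc_self ht)
    have : Real.exp (-(z^2 * (1 - Real.sin (2*t))⁻¹)) ≤ 1 := by
      rw [Real.exp_le_one_iff]
      have : (0:ℝ) ≤ z^2 * (1 - Real.sin (2*t))⁻¹ := by positivity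
      linarith
    linarith
  have hintg : IntegrableOn (fun t => 1 - Real.exp (-(z^2 * (1 - Real.sin (2*t))⁻¹)))
      (Set.Ioo (-a) a) :=
    ((contOn_f ha ha' z).integrableOn_Icc).mono_set Set.Ioo_subset_Icc_self
  have hlint : ∫⁻ t in Set.Ioo (-a) a,
        ENNReal.ofReal (1 - Real.exp (-(z^2 * (1 - Real.sin (2*t))⁻¹)))
      = ENNReal.ofReal (∫ t in Set.Ioo (-a) a,
        (1 - Real.exp (-(z^2 * (1 - Real.sin (2*t))⁻¹)))) := by
    rw [← ofReal_integral_eq_lintegral_ofReal hintg]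
    filter_upwards [ae_restrict_mem measurableSet_Ioo] with t ht using hnn t ht
  rw [hlint]
  have h2a : a - (-a) = 2*a := by ring
  rw [h2a, smul_eq_mul, ENNReal.toReal_mul, ENNReal.toReal_inv, ENNReal.toReal_ofReal (by linarith),
    ENNReal.toReal_ofReal (setIntegral_nonneg measurableSet_Ioo hnn)]

lemma est {a : ℝ} (z : ℝ) (ha : 0 < a) (ha' : a ≤ π/8) :
    |(∫ t in Set.Ioo (-a) a, (1 - Real.exp (-(z^2 * (1 - Real.sin (2*t))⁻¹))))
      - z^2 * Real.tan (2*a)| ≤ 25 * z^4 * (2*a) := by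
  have hg_int : IntegrableOn (fun t => z^2 * (1 - Real.sin (2*t))⁻¹) (Set.Ioo (-a) a) :=
    ((continuousOn_const.mul (contOn_g ha ha')).integrableOn_Icc).mono_set
      Set.Ioo_subset_Icc_self
  have hf_int : IntegrableOn (fun t => 1 - Real.exp (-(z^2 * (1 - Real.sin (2*t))⁻¹)))
      (Set.Ioo (-a) a) :=
    ((contOn_f ha ha' z).integrableOn_Icc).mono_set Set.Ioo_subset_Icc_self
  have hz2 : z^2 * Real.tan (2*a) = ∫ t in Set.Ioo (-a) a, z^2 * (1 - Real.sin (2*t))⁻¹ := by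
    rw [MeasureTheory.integral_const_mul, integral_g a ha ha']
  rw [hz2, ← MeasureTheory.integral_sub hf_int hg_int]
  have hbound : ∀ t ∈ Set.Ioo (-a) a,
      ‖(1 - Real.exp (-(z^2 * (1 - Real.sin (2*t))⁻¹))) - z^2 * (1 - Real.sin (2*t))⁻¹‖
        ≤ 25 * z^4 := by
    intro t ht
    have ht' := Set.Ioo_subset_Icc_self ht
    have hpos := one_sub_sin_pos ha ha' ht'
    have hg5 := g_le_five ha ha' ht'
    have hx : (0:ℝ) ≤ z^2 * (1 - Real.sin (2*t))⁻¹ := by positivity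
    calc ‖(1 - Real.exp (-(z^2 * (1 - Real.sin (2*t))⁻¹))) - z^2 * (1 - Real.sin (2*t))⁻¹‖
        ≤ (z^2 * (1 - Real.sin (2*t))⁻¹)^2 := exp_approx' hx
      _ = z^4 * ((1 - Real.sin (2*t))⁻¹)^2 := by ring
      _ ≤ z^4 * 25 := by
          have hgnn : (0:ℝ) ≤ (1 - Real.sin (2*t))⁻¹ := inv_nonneg.2 hpos.le
          have : ((1 - Real.sin (2*t))⁻¹)^2 ≤ 25 := by nlinarith
          exact mul_le_mul_of_nonneg_left this (by positivity)
      _ = 25 * z^4 := by ring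
  have hvol : volume (Set.Ioo (-a) a) < ⊤ := measure_Ioo_lt_top
  have hmeas := (hf_int.sub hg_int).aestronglyMeasurable
  have hle := MeasureTheory.norm_setIntegral_le_of_norm_le_const hvol hbound
  rw [Real.volume_real_Ioo, max_eq_left (by linarith : (0:ℝ) ≤ a - -a)] at hle
  rw [← Real.norm_eq_abs]
  calc ‖_‖ ≤ 25 * z^4 * (a - -a) := hle
    _ = 25 * z^4 * (2*a) := by ring

/-- Small-argument behavior of the per-branch statistic for `n ≥ 3`:
`P(√(W(1 − sin 2θ)) ≤ z) = (2^{n−1}/π) tan(π/2^{n−1}) z² + o(z²)` as `z → 0⁺`. -/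
theorem stmt16
    {Ω : Type*} [MeasurableSpace Ω] (P : Measure Ω) [IsProbabilityMeasure P]
    (n : ℕ) (hn : 3 ≤ n)
    (W θ : Ω → ℝ) (hW : Measurable W) (hθ : Measurable θ)
    (hWlaw : Measure.map W P = expMeasure 1)
    (hθlaw : Measure.map θ P = unifOn (-(π / 2 ^ n)) (π / 2 ^ n))
    (hindep : IndepFun W θ P) :
    (fun z => (P {ω | Real.sqrt (W ω * (1 - Real.sin (2 * θ ω))) ≤ z}).toReal
        - (2 ^ (n - 1) / π) * Real.tan (π / 2 ^ (n - 1)) * z ^ 2)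
      =o[nhdsWithin (0 : ℝ) (Set.Ioi 0)] fun z : ℝ => z ^ 2 := by
  haveI : IsProbabilityMeasure (expMeasure 1) := isProbabilityMeasure_expMeasure one_pos
  have hpi := Real.pi_pos
  set a : ℝ := π / 2^n with ha_def
  have ha : 0 < a := by positivity
  have h2n : (8:ℝ) ≤ 2^n := by
    calc (8:ℝ) = 2^3 := by norm_num
      _ ≤ 2^n := by exact pow_le_pow_right₀ (by norm_num) hn
  have ha' : a ≤ π/8 := by
    rw [ha_def, div_le_div_iff₀ (by positivity) (by norm_num)]
    nlinarith
  have h2a : 2*a = π/2^(n-1) := by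
    rw [ha_def]
    have hpow : (2:ℝ)^n = 2 * 2^(n-1) := by
      rw [← pow_succ']
      congr 1
      omega
    rw [hpow]
    field_simp
  have key : ∀ z : ℝ, 0 < z →
      (P {ω | Real.sqrt (W ω * (1 - Real.sin (2 * θ ω))) ≤ z}).toReal
        = (2*a)⁻¹ * ∫ t in Set.Ioo (-a) a,
            (1 - Real.exp (-(z^2 * (1 - Real.sin (2*t))⁻¹))) := by
    intro z hz
    have hset : {ω | Real.sqrt (W ω * (1 - Real.sin (2 * θ ω))) ≤ z}
        = (fun ω => (θ ω, W ω)) ⁻¹' {p : ℝ×ℝ | p.2 * (1 - Real.sin (2*p.1)) ≤ z^2} := by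
      ext ω
      simp only [Set.mem_setOf_eq, Set.mem_preimage]
      rw [Real.sqrt_le_left hz.le]
    have hS : MeasurableSet {p : ℝ×ℝ | p.2 * (1 - Real.sin (2*p.1)) ≤ z^2} :=
      measurableSet_le (by fun_prop) measurable_const
    have hmap : Measure.map (fun ω => (θ ω, W ω)) P = (unifOn (-a) a).prod (expMeasure 1) := by
      rw [← hθlaw, ← hWlaw]
      exact (indepFun_iff_map_prod_eq_prod_map_map hθ.aemeasurable hW.aemeasurable).mp
        hindep.symm
    rw [hset, ← Measure.map_apply (hθ.prodMk hW) hS, hmap]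
    exact prod_apply_eq ha ha'
  rw [Asymptotics.isLittleO_iff]
  intro ε hε
  have hδ : 0 < Real.sqrt (ε/25) := Real.sqrt_pos.mpr (by positivity)
  filter_upwards [Ioo_mem_nhdsGT_of_mem (Set.left_mem_Ico.mpr hδ)] with z hz
  obtain ⟨hz0, hzδ⟩ := hz
  have hkey := key z hz0
  have hest := est z ha ha'
  have hcz : (2:ℝ) ^ (n - 1) / π * Real.tan (π / 2 ^ (n - 1)) * z ^ 2
      = (2*a)⁻¹ * (z^2 * Real.tan (2*a)) := by
    rw [h2a]
    have h2n1 : (0:ℝ) < 2^(n-1) := by positivity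
    field_simp
  rw [hkey, hcz]
  have hzsq : 25 * z^2 ≤ ε := by
    have : z^2 < ε/25 := by
      have := (Real.lt_sqrt hz0.le).mp hzδ
      linarith
    linarith
  have h1 : ‖(2*a)⁻¹ * (∫ t in Set.Ioo (-a) a, (1 - Real.exp (-(z^2 * (1 - Real.sin (2*t))⁻¹))))
      - (2*a)⁻¹ * (z^2 * Real.tan (2*a))‖ ≤ (2*a)⁻¹ * (25 * z^4 * (2*a)) := by
    rw [← mul_sub, norm_mul, Real.norm_eq_abs, Real.norm_eq_abs,
      abs_of_nonneg (by positivity : (0:ℝ) ≤ (2*a)⁻¹)]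
    exact mul_le_mul_of_nonneg_left hest (by positivity)
  calc ‖(2*a)⁻¹ * (∫ t in Set.Ioo (-a) a, (1 - Real.exp (-(z^2 * (1 - Real.sin (2*t))⁻¹))))
      - (2*a)⁻¹ * (z^2 * Real.tan (2*a))‖ ≤ (2*a)⁻¹ * (25 * z^4 * (2*a)) := h1
    _ = 25 * z^2 * z^2 := by field_simp
    _ ≤ ε * z^2 := by nlinarith [sq_nonneg z]
    _ = ε * ‖z^2‖ := by rw [Real.norm_eq_abs, abs_of_nonneg (sq_nonneg z)]
end
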